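/- Let n ≥ 1 and let B be a finite set of exponent vectors in ℕ^n. Then there exists a cone-closed finite set A of exponent vectors in ℕ^n with |A| = |B| such that the square matrix over ℚ with rows indexed by a ∈ A, columns indexed by b ∈ B, and (a,b)-entry T(a,b) = ∏_{i=1}^{n} C(bᵢ, aᵢ) (the product of binomial coefficients, viewed as a rational number) is invertible; consequently the same matrix is invertible over any field of characteristic zero. -/

import Mathlib

open Finset Submodule

namespace FindConeClosed

instance instWFfin (n : ℕ) : WellFoundedLT (Fin n) := inferInstance

variable {n : ℕ}

/-- The row vector of the transfer matrix attached to exponent `a`, as a function on `B`. -/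
noncomputable def v (B : Finset (Fin n → ℕ)) (a : Fin n → ℕ) : {x // x ∈ B} → ℚ :=
  fun b => ∏ i, (((b : Fin n → ℕ) i).choose (a i) : ℚ)

lemma key1 (x k : ℕ) :
    (x : ℚ) * x.choose k = ((k : ℚ) + 1) * x.choose (k + 1) + (k : ℚ) * x.choose k := by
  rcases le_or_gt k x with h | h
  · have h0 := Nat.choose_succ_right_eq x k
    have h1 := congrArg (fun t : ℕ => (t : ℚ)) h0
    push_cast [Nat.cast_sub h] at h1
    nlinarith [h1]
  · rw [Nat.choose_eq_zero_of_lt h, Nat.choose_eq_zero_of_lt (h.trans (Nat.lt_succ_self k))]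
    push_cast; ring

lemma mul_rec (B : Finset (Fin n → ℕ)) (a : Fin n → ℕ) (i : Fin n) (b : {x // x ∈ B}) :
    ((b : Fin n → ℕ) i : ℚ) * v B a b
      = ((a i : ℚ) + 1) * v B (a + (Pi.single i 1 : Fin n → ℕ)) b + (a i : ℚ) * v B a b := by
  classical
  unfold v
  have h2 : ∏ j ∈ Finset.univ.erase i, (((b : Fin n → ℕ) j).choose ((a + (Pi.single i 1 : Fin n → ℕ)) j) : ℚ)
      = ∏ j ∈ Finset.univ.erase i, (((b : Fin n → ℕ) j).choose (a j) : ℚ) := by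
    refine Finset.prod_congr rfl fun j hj => ?_
    rw [Pi.add_apply, Pi.single_eq_of_ne (Finset.mem_erase.1 hj).1, add_zero]
  have h3 : (a + (Pi.single i 1 : Fin n → ℕ)) i = a i + 1 := by simp
  have e1 : ∏ j, (((b : Fin n → ℕ) j).choose (a j) : ℚ)
      = (((b : Fin n → ℕ) i).choose (a i) : ℚ)
        * ∏ j ∈ Finset.univ.erase i, (((b : Fin n → ℕ) j).choose (a j) : ℚ) :=
    (Finset.mul_prod_erase Finset.univ _ (Finset.mem_univ i)).symm
  have e2 : ∏ j, (((b : Fin n → ℕ) j).choose ((a + (Pi.single i 1 : Fin n → ℕ)) j) : ℚ)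
      = (((b : Fin n → ℕ) i).choose (a i + 1) : ℚ)
        * ∏ j ∈ Finset.univ.erase i, (((b : Fin n → ℕ) j).choose (a j) : ℚ) := by
    rw [← h2, ← h3]
    exact (Finset.mul_prod_erase Finset.univ _ (Finset.mem_univ i)).symm
  rw [e1, e2]
  have := key1 ((b : Fin n → ℕ) i) (a i)
  set P := ∏ j ∈ Finset.univ.erase i, (((b : Fin n → ℕ) j).choose (a j) : ℚ)
  linear_combination P * this

/-- multiplication by the `i`-th coordinate function, as a linear map. -/
noncomputable def mu (B : Finset (Fin n → ℕ)) (i : Fin n) :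
    ({x // x ∈ B} → ℚ) →ₗ[ℚ] ({x // x ∈ B} → ℚ) where
  toFun f := fun b => ((b : Fin n → ℕ) i : ℚ) * f b
  map_add' f g := by funext b; simp [mul_add]
  map_smul' c f := by funext b; simp [Pi.smul_apply]; ring

lemma mu_v (B : Finset (Fin n → ℕ)) (a : Fin n → ℕ) (i : Fin n) :
    mu B i (v B a) = ((a i : ℚ) + 1) • v B (a + (Pi.single i 1 : Fin n → ℕ)) + (a i : ℚ) • v B a := by
  funext b
  simpa [mu] using mul_rec B a i b

/-- the span of rows with lexicographically smaller exponent -/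
noncomputable def Sp (B : Finset (Fin n → ℕ)) (a : Fin n → ℕ) : Submodule ℚ ({x // x ∈ B} → ℚ) :=
  Submodule.span ℚ (v B '' {c | toLex c < toLex a})

/-- the greedy "new row" set -/
def Delta (B : Finset (Fin n → ℕ)) : Set (Fin n → ℕ) := {a | v B a ∉ Sp B a}

lemma lt_add_single (a : Fin n → ℕ) (i : Fin n) :
    toLex a < toLex (a + (Pi.single i 1 : Fin n → ℕ)) := by
  refine Pi.toLex_strictMono ?_
  refine lt_of_le_of_ne (fun j => ?_) fun h => ?_
  · simp [Pi.add_apply]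
  · have := congrFun h i
    simp at this

lemma closure_step (B : Finset (Fin n → ℕ)) (a : Fin n → ℕ) (i : Fin n)
    (h : a ∉ Delta B) : a + (Pi.single i 1 : Fin n → ℕ) ∉ Delta B := by
  classical
  simp only [Delta, Set.mem_setOf_eq, not_not] at h ⊢
  set a' := a + (Pi.single i 1 : Fin n → ℕ) with ha'
  have hlt : toLex a < toLex a' := lt_add_single a i
  -- v a ∈ Sp a'
  have hmono : Sp B a ≤ Sp B a' := by
    apply Submodule.span_mono
    apply Set.image_mono
    intro c hc
    exact lt_trans hc hlt
  have hva : v B a ∈ Sp B a' := hmono h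
  -- mu maps Sp a into Sp a'
  have hmu : ∀ x ∈ Sp B a, mu B i x ∈ Sp B a' := by
    intro x hx
    have : Submodule.map (mu B i) (Sp B a) ≤ Sp B a' := by
      rw [Sp, Submodule.map_span, Submodule.span_le]
      rintro y ⟨z, ⟨c, hc, rfl⟩, rfl⟩
      have h1 : v B (c + (Pi.single i 1 : Fin n → ℕ)) ∈ Sp B a' := by
        apply Submodule.subset_span
        refine ⟨c + (Pi.single i 1 : Fin n → ℕ), ?_, rfl⟩
        have : toLex (c + (Pi.single i 1 : Fin n → ℕ)) < toLex (a + (Pi.single i 1 : Fin n → ℕ)) :=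
          add_lt_add_of_lt_of_le (hc : toLex c < toLex a) (le_refl (toLex ((Pi.single i 1 : Fin n → ℕ))))
        exact this
      have h2 : v B c ∈ Sp B a' := by
        apply Submodule.subset_span
        exact ⟨c, lt_trans hc hlt, rfl⟩
      rw [mu_v]
      exact Submodule.add_mem _ (Submodule.smul_mem _ _ h1) (Submodule.smul_mem _ _ h2)
    exact this ⟨x, hx, rfl⟩
  have hmua : mu B i (v B a) ∈ Sp B a' := hmu _ h
  -- solve for v a'
  have hne : ((a i : ℚ) + 1) ≠ 0 := by positivity
  have hexp : ((a i : ℚ) + 1) • v B a' = mu B i (v B a) - (a i : ℚ) • v B a := by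
    rw [mu_v]; module
  have : v B a' = ((a i : ℚ) + 1)⁻¹ • (mu B i (v B a) - (a i : ℚ) • v B a) := by
    rw [← hexp, smul_smul, inv_mul_cancel₀ hne, one_smul]
  rw [this]
  exact Submodule.smul_mem _ _ (Submodule.sub_mem _ hmua (Submodule.smul_mem _ _ hva))

lemma delta_cone_closed (B : Finset (Fin n → ℕ)) :
    ∀ m ∈ Delta B, ∀ e : Fin n → ℕ, e ≤ m → e ∈ Delta B := by
  classical
  suffices H : ∀ d : ℕ, ∀ e m : Fin n → ℕ, e ≤ m → (∑ i, (m i - e i)) = d →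
      e ∉ Delta B → m ∉ Delta B by
    intro m hm e hle
    by_contra he
    exact H (∑ i, (m i - e i)) e m hle rfl he hm
  intro d
  induction d with
  | zero =>
    intro e m hle hsum he
    have : e = m := by
      funext i
      have h1 := Finset.sum_eq_zero_iff.1 hsum i (Finset.mem_univ i)
      have h2 : e i ≤ m i := hle i
      omega
    rwa [this] at he
  | succ d ih =>
    intro e m hle hsum he
    have hex : ∃ i, e i < m i := by
      by_contra hno
      push_neg at hno
      have hz : ∀ i, m i - e i = 0 := fun i => by have := hno i; omega
      simp [hz] at hsum
    obtain ⟨i, hi⟩ := hex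
    have hle' : e + (Pi.single i 1 : Fin n → ℕ) ≤ m := by
      intro j
      by_cases hji : j = i
      · subst hji; simpa using hi
      · simpa [Pi.single_eq_of_ne hji] using hle j
    have hA : ∑ j, (m j - e j) = (m i - e i) + ∑ j ∈ Finset.univ.erase i, (m j - e j) :=
      (Finset.add_sum_erase Finset.univ _ (Finset.mem_univ i)).symm
    have hB : ∑ j, (m j - (e + (Pi.single i 1 : Fin n → ℕ)) j)
        = (m i - (e i + 1)) + ∑ j ∈ Finset.univ.erase i, (m j - e j) := by
      rw [← Finset.add_sum_erase Finset.univ _ (Finset.mem_univ i)]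
      congr 1
      · simp
      · refine Finset.sum_congr rfl fun j hj => ?_
        rw [Pi.add_apply, Pi.single_eq_of_ne (Finset.mem_erase.1 hj).1, add_zero]
    have hsum' : (∑ j, (m j - (e + (Pi.single i 1 : Fin n → ℕ)) j)) = d := by
      rw [hB]; rw [hA] at hsum; omega
    exact ih (e + (Pi.single i 1 : Fin n → ℕ)) m hle' hsum' (closure_step B e i he)

lemma choose_trinomial (x p t : ℕ) (h : p ≤ x) :
    x.choose (p + t) * (p + t).choose p = x.choose p * (x - p).choose t := by
  rcases le_or_gt (p + t) x with h2 | h2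
  · have h3 := Nat.choose_mul (n := x) (Nat.le_add_right p t)
    simpa using h3
  · rw [Nat.choose_eq_zero_of_lt h2, Nat.choose_eq_zero_of_lt (by omega : x - p < t),
      Nat.zero_mul, Nat.mul_zero]

lemma alt_sum (D p x : ℕ) (hx : x ≤ D) :
    ∑ t ∈ Finset.range (D + 1), (-1 : ℚ) ^ t * ((p + t).choose p : ℚ) * (x.choose (p + t) : ℚ)
      = if x = p then 1 else 0 := by
  rcases lt_or_ge x p with h | h
  · rw [Finset.sum_eq_zero, if_neg (by omega)]
    intro t ht
    rw [Nat.choose_eq_zero_of_lt (by omega : x < p + t), Nat.cast_zero, mul_zero]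
  · have key : ∀ t : ℕ, (-1 : ℚ) ^ t * ((p + t).choose p : ℚ) * (x.choose (p + t) : ℚ)
        = (x.choose p : ℚ) * ((-1 : ℚ) ^ t * ((x - p).choose t : ℚ)) := by
      intro t
      have h4 := choose_trinomial x p t h
      have h5 : (x.choose (p + t) : ℚ) * ((p + t).choose p : ℚ)
          = (x.choose p : ℚ) * ((x - p).choose t : ℚ) := by exact_mod_cast congrArg (fun z : ℕ => (z : ℚ)) h4
      linear_combination ((-1 : ℚ) ^ t) * h5
    rw [Finset.sum_congr rfl fun t _ => key t, ← Finset.mul_sum]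
    set m := x - p with hm
    have hmD : m + 1 ≤ D + 1 := by omega
    have hsub : ∑ t ∈ Finset.range (D + 1), (-1 : ℚ) ^ t * ((x - p).choose t : ℚ)
        = ∑ t ∈ Finset.range (m + 1), (-1 : ℚ) ^ t * (m.choose t : ℚ) := by
      rw [← hm]
      refine (Finset.sum_subset (Finset.range_subset_range.2 hmD) ?_).symm
      intro t _ ht2
      rw [Nat.choose_eq_zero_of_lt (by simp at ht2 ⊢; omega), Nat.cast_zero, mul_zero]
    have hQ : ∑ t ∈ Finset.range (m + 1), (-1 : ℚ) ^ t * (m.choose t : ℚ)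
        = if m = 0 then 1 else 0 := by
      have hz := Int.alternating_sum_range_choose (n := m)
      have hz2 := congrArg (fun z : ℤ => (z : ℚ)) hz
      push_cast at hz2
      exact hz2
    rw [hsub, hQ]
    by_cases hxp : x = p
    · rw [if_pos hxp, if_pos (by omega), mul_one, hxp, Nat.choose_self, Nat.cast_one]
    · rw [if_neg hxp, if_neg (by omega), mul_zero]

lemma single_mem_span (B : Finset (Fin n → ℕ)) (p : {x // x ∈ B}) :
    Pi.single p (1 : ℚ) ∈ Submodule.span ℚ (Set.range (v B)) := by
  classical
  set D := B.sup (fun b => Finset.univ.sup b) with hDdef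
  have hD : ∀ b : {x // x ∈ B}, ∀ i, (b : Fin n → ℕ) i ≤ D := fun b i =>
    le_trans (Finset.le_sup (Finset.mem_univ i)) (Finset.le_sup b.2)
  have hrep : Pi.single p (1 : ℚ)
      = ∑ j ∈ Fintype.piFinset (fun _ : Fin n => Finset.range (D + 1)),
          (∏ i, (-1 : ℚ) ^ (j i) * ((((p : Fin n → ℕ) i + j i).choose ((p : Fin n → ℕ) i)) : ℚ))
            • v B ((p : Fin n → ℕ) + j) := by
    funext b
    rw [Finset.sum_apply]
    simp only [Pi.smul_apply, smul_eq_mul]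
    have hterm : ∀ j : Fin n → ℕ,
        (∏ i, (-1 : ℚ) ^ (j i) * ((((p : Fin n → ℕ) i + j i).choose ((p : Fin n → ℕ) i)) : ℚ))
            * v B ((p : Fin n → ℕ) + j) b
        = ∏ i, ((-1 : ℚ) ^ (j i) * ((((p : Fin n → ℕ) i + j i).choose ((p : Fin n → ℕ) i)) : ℚ)
            * (((b : Fin n → ℕ) i).choose ((p : Fin n → ℕ) i + j i) : ℚ)) := by
      intro j
      rw [v, ← Finset.prod_mul_distrib]
      rfl
    rw [Finset.sum_congr rfl fun j _ => hterm j]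
    have hps := Finset.prod_univ_sum (fun _ : Fin n => Finset.range (D + 1))
      (fun (i : Fin n) (t : ℕ) => (-1 : ℚ) ^ t
        * ((((p : Fin n → ℕ) i + t).choose ((p : Fin n → ℕ) i)) : ℚ)
        * (((b : Fin n → ℕ) i).choose ((p : Fin n → ℕ) i + t) : ℚ))
    rw [← hps]
    have hcoord : ∀ i : Fin n,
        (∑ t ∈ Finset.range (D + 1), (-1 : ℚ) ^ t
            * ((((p : Fin n → ℕ) i + t).choose ((p : Fin n → ℕ) i)) : ℚ)
            * (((b : Fin n → ℕ) i).choose ((p : Fin n → ℕ) i + t) : ℚ))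
        = if (b : Fin n → ℕ) i = (p : Fin n → ℕ) i then 1 else 0 := fun i =>
      alt_sum D ((p : Fin n → ℕ) i) ((b : Fin n → ℕ) i) (hD b i)
    rw [Finset.prod_congr rfl fun i _ => hcoord i, Finset.prod_boole]
    rw [Pi.single_apply]
    by_cases hbp : b = p
    · rw [if_pos hbp, if_pos]
      intro i _
      rw [hbp]
    · rw [if_neg hbp, if_neg]
      intro hall
      apply hbp
      apply Subtype.ext
      funext i
      exact hall i (Finset.mem_univ i)
  rw [hrep]
  exact Submodule.sum_mem _ fun j _ =>
    Submodule.smul_mem _ _ (Submodule.subset_span ⟨(p : Fin n → ℕ) + j, rfl⟩)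

lemma span_range_v (B : Finset (Fin n → ℕ)) :
    Submodule.span ℚ (Set.range (v B)) = ⊤ := by
  classical
  rw [Submodule.eq_top_iff']
  intro f
  have hf : f = ∑ p : {x // x ∈ B}, f p • (Pi.single p 1 : {x // x ∈ B} → ℚ) := by
    funext b
    rw [Finset.sum_apply]
    simp only [Pi.smul_apply, smul_eq_mul, Pi.single_apply]
    rw [Finset.sum_eq_single b]
    · simp
    · intro c _ hc; simp [Ne.symm hc, if_neg]
    · intro hb; exact absurd (Finset.mem_univ b) hb
  rw [hf]
  exact Submodule.sum_mem _ fun p _ => Submodule.smul_mem _ _ (single_mem_span B p)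

lemma v_mem_span_delta (B : Finset (Fin n → ℕ)) (m : Fin n → ℕ) :
    v B m ∈ Submodule.span ℚ (v B '' Delta B) := by
  classical
  have H : ∀ m' : Lex (Fin n → ℕ), v B (ofLex m') ∈ Submodule.span ℚ (v B '' Delta B) := by
    intro m'
    induction m' using WellFoundedLT.induction with
    | ind m' ih =>
      by_cases hm : ofLex m' ∈ Delta B
      · exact Submodule.subset_span ⟨ofLex m', hm, rfl⟩
      · simp only [Delta, Set.mem_setOf_eq, not_not] at hm
        have hle : Sp B (ofLex m') ≤ Submodule.span ℚ (v B '' Delta B) := by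
          rw [Sp, Submodule.span_le]
          rintro _ ⟨c, hc, rfl⟩
          exact ih (toLex c) hc
        exact hle hm
  exact H (toLex m)

lemma span_delta (B : Finset (Fin n → ℕ)) :
    Submodule.span ℚ (v B '' Delta B) = ⊤ := by
  rw [← top_le_iff, ← span_range_v B, Submodule.span_le]
  rintro _ ⟨m, rfl⟩
  exact v_mem_span_delta B m

lemma delta_linearIndependent (B : Finset (Fin n → ℕ)) :
    LinearIndependent ℚ (fun a : Delta B => v B (a : Fin n → ℕ)) := by
  classical
  rw [linearIndependent_iff']
  intro s g hsum a ha
  by_contra hg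
  -- consider the lex-largest element of s with nonzero coefficient
  have hne : (s.filter fun c => g c ≠ 0).Nonempty := ⟨a, Finset.mem_filter.2 ⟨ha, hg⟩⟩
  obtain ⟨a₀, ha₀, hmax⟩ := Finset.exists_max_image (s.filter fun c => g c ≠ 0)
    (fun c => toLex (c : Fin n → ℕ)) hne
  have hg₀ : g a₀ ≠ 0 := (Finset.mem_filter.1 ha₀).2
  -- v a₀ lies in the span of strictly smaller rows
  have hsum2 : ∑ c ∈ s.filter (fun c => g c ≠ 0), g c • v B (c : Fin n → ℕ) = 0 := by
    rw [Finset.sum_subset (Finset.filter_subset _ s) (fun c hc hnc => by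
      have hgc : g c = 0 := by
        by_contra h0
        exact hnc (Finset.mem_filter.2 ⟨hc, h0⟩)
      rw [hgc, zero_smul])]
    exact hsum
  have hsplit : g a₀ • v B (a₀ : Fin n → ℕ)
      = - ∑ c ∈ (s.filter fun c => g c ≠ 0).erase a₀, g c • v B (c : Fin n → ℕ) := by
    rw [← Finset.add_sum_erase _ _ ha₀] at hsum2
    exact eq_neg_of_add_eq_zero_left hsum2
  have hspan : v B (a₀ : Fin n → ℕ) ∈ Sp B (a₀ : Fin n → ℕ) := by
    have : v B (a₀ : Fin n → ℕ)
        = (g a₀)⁻¹ • (g a₀ • v B (a₀ : Fin n → ℕ)) := by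
      rw [smul_smul, inv_mul_cancel₀ hg₀, one_smul]
    rw [this, hsplit]
    refine Submodule.smul_mem _ _ (Submodule.neg_mem _ (Submodule.sum_mem _ fun c hc => ?_))
    refine Submodule.smul_mem _ _ (Submodule.subset_span ⟨(c : Fin n → ℕ), ?_, rfl⟩)
    have hcs := Finset.mem_of_mem_erase hc
    have hlex := hmax c hcs
    have hne2 : (c : Delta B) ≠ a₀ := Finset.ne_of_mem_erase hc
    have : toLex (c : Fin n → ℕ) ≠ toLex (a₀ : Fin n → ℕ) := by
      intro h
      apply hne2
      apply Subtype.ext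
      exact toLex.injective h
    exact lt_of_le_of_ne hlex this
  exact a₀.2 hspan

end FindConeClosed

open FindConeClosed Module in
theorem cone_closed_transfer_matrix_invertible
    (n : ℕ) (hn : 1 ≤ n) (B : Finset (Fin n → ℕ)) :
    ∃ A : Finset (Fin n → ℕ),
      (∀ m ∈ A, ∀ e : Fin n → ℕ, e ≤ m → e ∈ A) ∧
      A.card = B.card ∧
      (∃ N : Matrix B A ℚ,
        (Matrix.of fun (a : A) (b : B) =>
            ((∏ i, ((b : Fin n → ℕ) i).choose ((a : Fin n → ℕ) i) : ℕ) : ℚ)) * N = 1 ∧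
        N * (Matrix.of fun (a : A) (b : B) =>
            ((∏ i, ((b : Fin n → ℕ) i).choose ((a : Fin n → ℕ) i) : ℕ) : ℚ)) = 1) ∧
      (∀ (K : Type) (_ : Field K) (_ : CharZero K),
        ∃ N : Matrix B A K,
          (Matrix.of fun (a : A) (b : B) =>
              ((∏ i, ((b : Fin n → ℕ) i).choose ((a : Fin n → ℕ) i) : ℕ) : K)) * N = 1 ∧
          N * (Matrix.of fun (a : A) (b : B) =>
              ((∏ i, ((b : Fin n → ℕ) i).choose ((a : Fin n → ℕ) i) : ℕ) : K)) = 1) := by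
  classical
  have li := delta_linearIndependent B
  have hsp : ⊤ ≤ Submodule.span ℚ (Set.range fun a : Delta B => v B (a : Fin n → ℕ)) := by
    rw [← Set.image_eq_range]
    exact le_of_eq (span_delta B).symm
  let bD : Basis (Delta B) ℚ ({x // x ∈ B} → ℚ) := Basis.mk li hsp
  have hbD : ∀ a : Delta B, bD a = v B (a : Fin n → ℕ) := fun a => Basis.mk_apply li hsp a
  haveI : Fintype (Delta B) := FiniteDimensional.fintypeBasisIndex bD
  set A : Finset (Fin n → ℕ) := (Delta B).toFinset with hA
  have hmemA : ∀ x, x ∈ A ↔ x ∈ Delta B := fun x => Set.mem_toFinset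
  have hcard : A.card = B.card := by
    have h1 : A.card = Fintype.card (Delta B) := Set.toFinset_card _
    have h2 : Module.finrank ℚ ({x // x ∈ B} → ℚ) = Fintype.card (Delta B) :=
      Module.finrank_eq_card_basis bD
    have h3 : Module.finrank ℚ ({x // x ∈ B} → ℚ) = Fintype.card {x // x ∈ B} :=
      Module.finrank_fintype_fun_eq_card ℚ
    rw [h1, ← h2, h3, Fintype.card_coe]
  refine ⟨A, ?_, hcard, ?_⟩
  · intro m hm e hle
    exact (hmemA e).2 (delta_cone_closed B m ((hmemA m).1 hm) e hle)
  -- the transfer matrix over ℚ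
  · let eAD : {x // x ∈ A} ≃ Delta B :=
      Equiv.subtypeEquivRight fun x => hmemA x
    have hcoe : ∀ a : {x // x ∈ A}, ((eAD a : Delta B) : Fin n → ℕ) = (a : Fin n → ℕ) := by
      rintro ⟨x, hx⟩
      simp [eAD, Equiv.subtypeEquivRight]
      rfl
    let bA : Basis {x // x ∈ A} ℚ ({x // x ∈ B} → ℚ) := bD.reindex eAD.symm
    have hbA : ∀ a : {x // x ∈ A}, bA a = v B (a : Fin n → ℕ) := by
      intro a
      rw [Basis.reindex_apply, Equiv.symm_symm, hbD, hcoe]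
    have hcards : Fintype.card {x // x ∈ A} = Fintype.card {x // x ∈ B} := by
      rw [Fintype.card_coe, Fintype.card_coe, hcard]
    let f : {x // x ∈ A} ≃ {x // x ∈ B} := Fintype.equivOfCardEq hcards
    let bB : Basis {x // x ∈ B} ℚ ({x // x ∈ B} → ℚ) := bA.reindex f
    let std : Basis {x // x ∈ B} ℚ ({x // x ∈ B} → ℚ) := Pi.basisFun ℚ {x // x ∈ B}
    let P : Matrix {x // x ∈ B} {x // x ∈ B} ℚ := std.toMatrix bB
    have hP : ∀ i j, P i j = v B ((f.symm j : {x // x ∈ A}) : Fin n → ℕ) i := by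
      intro i j
      rw [show P = std.toMatrix bB from rfl, Basis.toMatrix_apply,
        show bB = bA.reindex f from rfl, Basis.reindex_apply, hbA]
      simp [std]
    haveI : Invertible P := std.invertibleToMatrix bB
    have hM : (Matrix.of fun (a : ({x // x ∈ A})) (b : ({x // x ∈ B})) =>
        ((∏ i, ((b : Fin n → ℕ) i).choose ((a : Fin n → ℕ) i) : ℕ) : ℚ))
        = (Matrix.transpose P).submatrix ⇑f _root_.id := by
      ext a b
      rw [Matrix.submatrix_apply, Matrix.transpose_apply]
      simp only [id_eq]
      rw [hP b (f a), Equiv.symm_apply_apply]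
      show ((∏ i, ((b : Fin n → ℕ) i).choose ((a : Fin n → ℕ) i) : ℕ) : ℚ) = v B (a : Fin n → ℕ) b
      rw [v]
      push_cast
      rfl
    have hQP : Matrix.transpose (⅟P) * (Matrix.transpose P) = 1 := by
      rw [← Matrix.transpose_mul, mul_invOf_self, Matrix.transpose_one]
    have hPQ : (Matrix.transpose P) * Matrix.transpose (⅟P) = 1 := by
      rw [← Matrix.transpose_mul, invOf_mul_self, Matrix.transpose_one]
    have key : ∃ N : Matrix {x // x ∈ B} {x // x ∈ A} ℚ,
        (Matrix.of fun (a : ({x // x ∈ A})) (b : ({x // x ∈ B})) =>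
            ((∏ i, ((b : Fin n → ℕ) i).choose ((a : Fin n → ℕ) i) : ℕ) : ℚ)) * N = 1 ∧
        N * (Matrix.of fun (a : ({x // x ∈ A})) (b : ({x // x ∈ B})) =>
            ((∏ i, ((b : Fin n → ℕ) i).choose ((a : Fin n → ℕ) i) : ℕ) : ℚ)) = 1 := by
      refine ⟨(Matrix.transpose (⅟P)).submatrix _root_.id ⇑f, ?_, ?_⟩
      · rw [hM]
        have := Matrix.submatrix_mul_equiv (Matrix.transpose P) (Matrix.transpose (⅟P)) ⇑f (Equiv.refl {x // x ∈ B}) ⇑f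
        rw [Equiv.coe_refl] at this
        rw [this, hPQ, Matrix.submatrix_one_equiv f]
      · rw [hM]
        have := Matrix.submatrix_mul_equiv (Matrix.transpose (⅟P)) (Matrix.transpose P) _root_.id f _root_.id
        rw [this, hQP]
        rw [Matrix.submatrix_id_id]
    obtain ⟨N, hMN, hNM⟩ := key
    refine ⟨⟨N, hMN, hNM⟩, ?_⟩
    -- transfer to characteristic zero fields
    intro K _ _
    let φ : ℚ →+* K := Rat.castHom K
    have hmap : (Matrix.of fun (a : ({x // x ∈ A})) (b : ({x // x ∈ B})) =>
        ((∏ i, ((b : Fin n → ℕ) i).choose ((a : Fin n → ℕ) i) : ℕ) : K))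
        = (Matrix.of fun (a : ({x // x ∈ A})) (b : ({x // x ∈ B})) =>
            ((∏ i, ((b : Fin n → ℕ) i).choose ((a : Fin n → ℕ) i) : ℕ) : ℚ)).map ⇑φ := by
      ext a b
      rw [Matrix.map_apply]
      simp only [Matrix.of_apply]
      rw [map_natCast]
    refine ⟨N.map ⇑φ, ?_, ?_⟩
    · rw [hmap, ← Matrix.map_mul, hMN, Matrix.map_one ⇑φ (map_zero φ) (map_one φ)]
    · rw [hmap, ← Matrix.map_mul, hNM, Matrix.map_one ⇑φ (map_zero φ) (map_one φ)]
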